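/- arXiv:1805.10597 — 4 statements merged into one kernel-verified Lean document; each statement's English description precedes it below -/
import Mathlib

section
/- Let β ∈ [0,1/2), γ ∈ (β, 1-β), λ > 0, C₁, C₂ > 0, and real α₀ < α*. Suppose u, v, w : [0,(α*-α₀)/λ) → B_{α*} satisfy ‖w‖^{(γ+1-β)} < ∞, where for κ > 0, ‖w‖^{(κ)} = sup_{α∈(α₀,α*], 0≤t<(α-α₀)/λ} (α-α₀-λt)^κ ‖w(t)‖_α. Suppose U(t,s) are linear operators with ‖U(t,s)y‖_α ≤ C₁ (α-α')^{-β} ‖y‖_{α'} for α' < α. Then the function t ↦ ∫₀ᵗ U(t,s) w(s) ds satisfies ‖∫₀^• U(·,s) w(s) ds‖^{(γ)} ≤ (2^γ C₁ / ((γ-β) λ)) · ‖w‖^{(γ+1-β)}. -/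
theorem stmt7 (E : Type*) [NormedAddCommGroup E] [NormedSpace ℝ E] [CompleteSpace E]
    (N : ℝ → E → ℝ) (β γ lam C₁ α₀ αs M : ℝ)
    (hβ0 : 0 ≤ β) (hβ : β < 1/2) (hγl : β < γ) (hγu : γ < 1 - β)
    (hlam : 0 < lam) (hC₁ : 0 < C₁) (hα : α₀ < αs) (hM : 0 ≤ M)
    (U : ℝ → ℝ → E →ₗ[ℝ] E) (w : ℝ → E)
    (hN : ∀ α (y : E), 0 ≤ N α y)
    -- evolution bound of order β in the scale
    (hU : ∀ ⦃α' α : ℝ⦄, α₀ ≤ α' → α' < α → α ≤ αs → ∀ t s (y : E),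
      N α (U t s y) ≤ C₁ * (α - α') ^ (-β) * N α' y)
    -- `M` bounds the weighted norm `‖w‖^{(γ+1-β)}`
    (hw : ∀ α t, α₀ < α → α ≤ αs → 0 ≤ t → t < (α - α₀) / lam →
      (α - α₀ - lam * t) ^ (γ + 1 - β) * N α (w t) ≤ M)
    -- the scale norms are compatible with the Bochner integral
    (hint : ∀ α t, 0 ≤ t →
      N α (∫ s in (0:ℝ)..t, U t s (w s)) ≤ ∫ s in (0:ℝ)..t, N α (U t s (w s)))
    (hmeas : ∀ α t, IntervalIntegrable (fun s => N α (U t s (w s)))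
      MeasureTheory.volume 0 t) :
    ∀ α t, α₀ < α → α ≤ αs → 0 ≤ t → t < (α - α₀) / lam →
      (α - α₀ - lam * t) ^ γ * N α (∫ s in (0:ℝ)..t, U t s (w s)) ≤
        2 ^ γ * C₁ / ((γ - β) * lam) * M := by
  intro α t hα₀ hαs ht hts
  have hq : 0 < γ - β := by linarith
  set q : ℝ := γ - β with hqdef
  set d : ℝ := α - α₀ - lam * t with hddef
  have hd0 : 0 < d := by
    have h := (lt_div_iff₀ hlam).mp hts
    simp only [hddef]; nlinarith
  have hlt : lam * t ≤ α - α₀ := by nlinarith [hlam.le, ht]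
  set α' : ℝ := α - d / 2 with hα'def
  have hlt0 : (0:ℝ) ≤ lam * t := mul_nonneg hlam.le ht
  have hαα' : α - α' = d / 2 := by simp only [hα'def]; ring
  have hα'ge : α₀ ≤ α' := by simp only [hα'def, hddef]; linarith
  have hα'gt : α₀ < α' := by simp only [hα'def, hddef]; linarith
  have hα'lt : α' < α := by simp only [hα'def]; linarith
  have hα'le : α' ≤ αs := le_of_lt (lt_of_lt_of_le hα'lt hαs)
  set a : ℝ := α' - α₀ with hadef
  have hat : a - lam * t = d / 2 := by simp only [hadef, hα'def, hddef]; ring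
  -- pointwise bound on [0,t]
  have hbase : ∀ s ∈ Set.Icc (0:ℝ) t, d / 2 ≤ a - lam * s := by
    intro s hs
    have : lam * s ≤ lam * t := mul_le_mul_of_nonneg_left hs.2 hlam.le
    simp only [hadef, hα'def, hddef]; linarith
  have hbase0 : ∀ s ∈ Set.Icc (0:ℝ) t, 0 < a - lam * s := fun s hs =>
    lt_of_lt_of_le (by linarith) (hbase s hs)
  have hkey : ∀ s ∈ Set.Icc (0:ℝ) t,
      N α (U t s (w s)) ≤ C₁ * (d/2) ^ (-β) * M * (a - lam * s) ^ (-(γ + 1 - β)) := by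
    intro s hs
    have hx0 := hbase0 s hs
    have hws : N α' (w s) ≤ M * (a - lam * s) ^ (-(γ + 1 - β)) := by
      have hw' := hw α' s hα'gt hα'le hs.1
        (by rw [lt_div_iff₀ hlam]; nlinarith [hx0])
      have hp : (0:ℝ) < (a - lam * s) ^ (γ + 1 - β) :=
        Real.rpow_pos_of_pos hx0 _
      rw [Real.rpow_neg hx0.le, ← div_eq_mul_inv, le_div_iff₀ hp]
      calc N α' (w s) * (a - lam * s) ^ (γ + 1 - β)
          = (α' - α₀ - lam * s) ^ (γ + 1 - β) * N α' (w s) := by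
            rw [mul_comm]
        _ ≤ M := hw'
    calc N α (U t s (w s)) ≤ C₁ * (α - α') ^ (-β) * N α' (w s) :=
          hU hα'ge hα'lt hαs t s (w s)
      _ ≤ C₁ * (d/2) ^ (-β) * (M * (a - lam * s) ^ (-(γ + 1 - β))) := by
          rw [hαα']
          exact mul_le_mul_of_nonneg_left hws
            (mul_nonneg hC₁.le (Real.rpow_nonneg (by linarith) _))
      _ = C₁ * (d/2) ^ (-β) * M * (a - lam * s) ^ (-(γ + 1 - β)) := by ring
  -- integrability of the majorant
  have hcont : ContinuousOn (fun s => (a - lam * s) ^ (-(γ + 1 - β))) (Set.Icc 0 t) := by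
    apply ContinuousOn.rpow_const
    · exact (continuousOn_const.sub (continuous_const.mul continuous_id).continuousOn)
    · intro s hs; exact Or.inl (hbase0 s hs).ne'
  have hgint : IntervalIntegrable (fun s => (a - lam * s) ^ (-(γ + 1 - β)))
      MeasureTheory.volume 0 t := by
    apply ContinuousOn.intervalIntegrable
    rwa [Set.uIcc_of_le ht]
  have hgint' : IntervalIntegrable
      (fun s => C₁ * (d/2) ^ (-β) * M * (a - lam * s) ^ (-(γ + 1 - β)))
      MeasureTheory.volume 0 t := hgint.const_mul _
  -- FTC evaluation of the majorant integral
  have hftc : ∫ s in (0:ℝ)..t, (a - lam * s) ^ (-(γ + 1 - β)) =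
      (a - lam * t) ^ (-q) / (q * lam) - (a - lam * 0) ^ (-q) / (q * lam) := by
    apply intervalIntegral.integral_eq_sub_of_hasDerivAt
    · intro s hs
      rw [Set.uIcc_of_le ht] at hs
      have hx0 := hbase0 s hs
      have h1 : HasDerivAt (fun s : ℝ => a - lam * s) (-lam) s := by
        simpa using ((hasDerivAt_id s).const_mul lam).const_sub a
      have h2 := (Real.hasDerivAt_rpow_const (x := a - lam * s) (p := -q)
        (Or.inl hx0.ne')).comp s h1
      have h3 := h2.div_const (q * lam)
      convert h3 using 1
      case e'_4 => rfl
      case e'_8 => rfl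
      have : -q - 1 = -(γ + 1 - β) := by simp [hqdef]; ring
      rw [← this]
      field_simp
    · exact hgint
  have hval : ∫ s in (0:ℝ)..t, (a - lam * s) ^ (-(γ + 1 - β)) ≤ (d/2) ^ (-q) / (q * lam) := by
    rw [hftc, hat]
    have h0 : (0:ℝ) ≤ (a - lam * 0) ^ (-q) / (q * lam) := by
      apply div_nonneg (Real.rpow_nonneg _ _) (by positivity)
      have : (0:ℝ) < a - lam * 0 := hbase0 0 ⟨le_refl _, ht⟩
      linarith
    linarith
  -- put everything together
  have hintle : N α (∫ s in (0:ℝ)..t, U t s (w s)) ≤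
      C₁ * (d/2) ^ (-β) * M * ((d/2) ^ (-q) / (q * lam)) := by
    calc N α (∫ s in (0:ℝ)..t, U t s (w s))
        ≤ ∫ s in (0:ℝ)..t, N α (U t s (w s)) := hint α t ht
      _ ≤ ∫ s in (0:ℝ)..t, C₁ * (d/2) ^ (-β) * M * (a - lam * s) ^ (-(γ + 1 - β)) := by
          apply intervalIntegral.integral_mono_on ht (hmeas α t) hgint'
          intro s hs; exact hkey s hs
      _ = C₁ * (d/2) ^ (-β) * M * ∫ s in (0:ℝ)..t, (a - lam * s) ^ (-(γ + 1 - β)) := by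
          rw [← intervalIntegral.integral_const_mul]
      _ ≤ C₁ * (d/2) ^ (-β) * M * ((d/2) ^ (-q) / (q * lam)) := by
          apply mul_le_mul_of_nonneg_left hval
          exact mul_nonneg (mul_nonneg hC₁.le (Real.rpow_nonneg (by linarith) _)) hM
  have hd2 : (0:ℝ) < d / 2 := by linarith
  have hfinal : d ^ γ * (C₁ * (d/2) ^ (-β) * M * ((d/2) ^ (-q) / (q * lam))) =
      2 ^ γ * C₁ / (q * lam) * M := by
    have h1 : (d/2) ^ (-β) * (d/2) ^ (-q) = (d/2) ^ (-γ) := by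
      rw [← Real.rpow_add hd2]; congr 1; simp [hqdef]; ring
    have h2 : d ^ γ = 2 ^ γ * (d/2) ^ γ := by
      rw [← Real.mul_rpow (by norm_num) hd2.le]; congr 1; ring
    have h3 : (d/2) ^ γ * (d/2) ^ (-γ) = 1 := by
      rw [← Real.rpow_add hd2]; simp
    calc d ^ γ * (C₁ * (d/2) ^ (-β) * M * ((d/2) ^ (-q) / (q * lam)))
        = (2 ^ γ * (d/2) ^ γ) * (C₁ * M / (q * lam)) * ((d/2) ^ (-β) * (d/2) ^ (-q)) := by
          rw [h2]; ring
      _ = 2 ^ γ * (C₁ * M / (q * lam)) * ((d/2) ^ γ * (d/2) ^ (-γ)) := by rw [h1]; ring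
      _ = 2 ^ γ * C₁ / (q * lam) * M := by rw [h3]; ring
  calc (α - α₀ - lam * t) ^ γ * N α (∫ s in (0:ℝ)..t, U t s (w s))
      = d ^ γ * N α (∫ s in (0:ℝ)..t, U t s (w s)) := rfl
    _ ≤ d ^ γ * (C₁ * (d/2) ^ (-β) * M * ((d/2) ^ (-q) / (q * lam))) :=
        mul_le_mul_of_nonneg_left hintle (Real.rpow_nonneg hd0.le _)
    _ = 2 ^ γ * C₁ / ((γ - β) * lam) * M := by rw [hfinal]
end

section
/- Let β ∈ [0,1/2), γ ∈ (β,1-β), λ > 0, C₂ > 0, r ∈ (0,∞], and real α₀ < α*. Let B(·,t) satisfy ‖B(u,t) - B(v,t)‖_α ≤ C₂ (α-α')^{β-1} ‖u - v‖_{α'} for all α₀ ≤ α' < α ≤ α* and u, v in the ball of radius r around x in B_{α'}. Then for any u, v ∈ S^γ with ‖u - x‖^{(0)}, ‖v - x‖^{(0)} ≤ r, one has ‖B(u(·),·) - B(v(·),·)‖^{(γ+1-β)} ≤ 2^{γ+1-β} C₂ ‖u - v‖^{(γ)}. -/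
theorem stmt8 (E : Type*) [AddCommGroup E] (N : ℝ → E → ℝ)
    (β γ lam C₂ α₀ αs M : ℝ) (r : ENNReal)
    (hβ0 : 0 ≤ β) (hβ : β < 1/2) (hγl : β < γ) (hγu : γ < 1 - β)
    (hlam : 0 < lam) (hC₂ : 0 < C₂) (hα : α₀ < αs) (hr : 0 < r) (hM : 0 ≤ M)
    (hN : ∀ α (y : E), 0 ≤ N α y)
    (x : E) (B : E → ℝ → E) (u v : ℝ → E)
    -- Ovcyannikov-type Lipschitz bound on the ball of radius `r` around `x`
    (hLip : ∀ ⦃α' α : ℝ⦄, α₀ ≤ α' → α' < α → α ≤ αs → ∀ t (y z : E),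
      ENNReal.ofReal (N α' (y - x)) ≤ r → ENNReal.ofReal (N α' (z - x)) ≤ r →
      N α (B y t - B z t) ≤ C₂ * (α - α') ^ (β - 1) * N α' (y - z))
    -- `‖u - x‖^{(0)} ≤ r` and `‖v - x‖^{(0)} ≤ r`
    (hu : ∀ α t, α₀ < α → α ≤ αs → 0 ≤ t → t < (α - α₀) / lam →
      ENNReal.ofReal (N α (u t - x)) ≤ r)
    (hv : ∀ α t, α₀ < α → α ≤ αs → 0 ≤ t → t < (α - α₀) / lam →
      ENNReal.ofReal (N α (v t - x)) ≤ r)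
    -- `M` bounds the weighted norm `‖u - v‖^{(γ)}`
    (huv : ∀ α t, α₀ < α → α ≤ αs → 0 ≤ t → t < (α - α₀) / lam →
      (α - α₀ - lam * t) ^ γ * N α (u t - v t) ≤ M) :
    ∀ α t, α₀ < α → α ≤ αs → 0 ≤ t → t < (α - α₀) / lam →
      (α - α₀ - lam * t) ^ (γ + 1 - β) * N α (B (u t) t - B (v t) t) ≤
        2 ^ (γ + 1 - β) * C₂ * M := by
  intro α t hα1 hα2 ht0 ht
  have hlt : lam * t < α - α₀ := by
    have h := (lt_div_iff₀ hlam).mp ht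
    linarith [mul_comm t lam]
  set d : ℝ := α - α₀ - lam * t with hdd
  have hd : 0 < d := by rw [hdd]; linarith
  have hlt0 : 0 ≤ lam * t := mul_nonneg hlam.le ht0
  have h2 : (0:ℝ) < d / 2 := by linarith
  have hA : α₀ < α - d / 2 := by rw [hdd]; linarith
  have hAs : α - d / 2 ≤ αs := by linarith
  have hAα : α - d / 2 < α := by linarith
  have ht' : t < (α - d / 2 - α₀) / lam := by
    rw [lt_div_iff₀ hlam, hdd]
    nlinarith [mul_comm t lam]
  have hB := hLip hA.le hAα hα2 t (u t) (v t)
    (hu _ t hA hAs ht0 ht') (hv _ t hA hAs ht0 ht')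
  have key : α - d / 2 - α₀ - lam * t = d / 2 := by rw [hdd]; ring
  have huv' := huv (α - d / 2) t hA hAs ht0 ht'
  rw [key] at huv'
  have hpow : (0:ℝ) < (d / 2) ^ γ := Real.rpow_pos_of_pos h2 γ
  have hN' : N (α - d / 2) (u t - v t) ≤ M / (d / 2) ^ γ := by
    rw [le_div_iff₀ hpow]
    linarith [huv', mul_comm ((d/2)^γ) (N (α - d / 2) (u t - v t))]
  have hαd : α - (α - d / 2) = d / 2 := by ring
  rw [hαd] at hB
  have hdp : (0:ℝ) ≤ d ^ (γ + 1 - β) := (Real.rpow_pos_of_pos hd _).le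
  have step1 : d ^ (γ + 1 - β) * N α (B (u t) t - B (v t) t) ≤
      d ^ (γ + 1 - β) * (C₂ * (d / 2) ^ (β - 1) * (M / (d / 2) ^ γ)) := by
    apply mul_le_mul_of_nonneg_left _ hdp
    calc N α (B (u t) t - B (v t) t)
        ≤ C₂ * (d / 2) ^ (β - 1) * N (α - d / 2) (u t - v t) := hB
      _ ≤ C₂ * (d / 2) ^ (β - 1) * (M / (d / 2) ^ γ) := by
          apply mul_le_mul_of_nonneg_left hN'
          positivity
  refine step1.trans_eq ?_
  have e1 : (d / 2 : ℝ) ^ (β - 1) / (d / 2) ^ γ = (d / 2) ^ (β - 1 - γ) :=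
    (Real.rpow_sub h2 _ _).symm
  have e2 : (d / 2 : ℝ) ^ (β - 1 - γ) = d ^ (β - 1 - γ) / 2 ^ (β - 1 - γ) :=
    Real.div_rpow hd.le (by norm_num) _
  have e3 : d ^ (γ + 1 - β) * d ^ (β - 1 - γ) = 1 := by
    rw [← Real.rpow_add hd]
    have h0 : γ + 1 - β + (β - 1 - γ) = 0 := by ring
    rw [h0, Real.rpow_zero]
  have e4 : (2:ℝ) ^ (γ + 1 - β) * 2 ^ (β - 1 - γ) = 1 := by
    rw [← Real.rpow_add (by norm_num : (0:ℝ) < 2)]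
    have h0 : γ + 1 - β + (β - 1 - γ) = 0 := by ring
    rw [h0, Real.rpow_zero]
  have h2g : (0:ℝ) < (2:ℝ) ^ (β - 1 - γ) := Real.rpow_pos_of_pos (by norm_num) _
  have e5 : d ^ (γ + 1 - β) * (d ^ (β - 1 - γ) / 2 ^ (β - 1 - γ)) = 2 ^ (γ + 1 - β) := by
    rw [← mul_div_assoc, e3, div_eq_iff h2g.ne']
    linarith [e4]
  have e6 : d ^ (γ + 1 - β) * (C₂ * (d / 2) ^ (β - 1) * (M / (d / 2) ^ γ)) =
      C₂ * M * (d ^ (γ + 1 - β) * ((d / 2) ^ (β - 1) / (d / 2) ^ γ)) := by ring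
  rw [e6, e1, e2, e5]
  ring
end

section
/- Under the combined hypotheses of the two preceding estimates (evolution bound of order β and Lipschitz bound of order 1-β), the operator 𝒯(u)(t) = ∫₀ᵗ U(t,s) B(u(s),s) ds satisfies, for all u, v ∈ S^γ with ‖u-x‖^{(0)}, ‖v-x‖^{(0)} ≤ r, the contraction estimate ‖𝒯(u) - 𝒯(v)‖^{(γ)} ≤ (2^{2γ+1-β} C₁ C₂ / ((γ-β)λ)) ‖u - v‖^{(γ)}. In particular, if λ > 2^{2γ+1-β} C₁ C₂/(γ-β) then 𝒯 is a strict contraction on the set {u ∈ S^γ : ‖u-x‖^{(0)} ≤ r}. -/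
lemma aux_half (e q : ℝ) (he : 0 < e) : (e/2)^q = 2^(-q) * e^q := by
  rw [Real.div_rpow he.le (by norm_num), Real.rpow_neg (by norm_num), div_eq_mul_inv, mul_comm]

theorem stmt9 (E : Type*) [NormedAddCommGroup E] [NormedSpace ℝ E] [CompleteSpace E]
    (N : ℝ → E → ℝ) (β γ lam C₁ C₂ α₀ αs M : ℝ) (r : ENNReal)
    (hβ0 : 0 ≤ β) (hβ : β < 1/2) (hγl : β < γ) (hγu : γ < 1 - β)
    (hlam : 0 < lam) (hC₁ : 0 < C₁) (hC₂ : 0 < C₂) (hα : α₀ < αs)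
    (hr : 0 < r) (hM : 0 ≤ M)
    (hN : ∀ α (y : E), 0 ≤ N α y)
    (x : E) (U : ℝ → ℝ → E →ₗ[ℝ] E) (B : E → ℝ → E) (u v : ℝ → E)
    -- evolution bound of order β in the scale
    (hU : ∀ ⦃α' α : ℝ⦄, α₀ ≤ α' → α' < α → α ≤ αs → ∀ t s (y : E),
      N α (U t s y) ≤ C₁ * (α - α') ^ (-β) * N α' y)
    -- Ovcyannikov-type Lipschitz bound of order 1-β on the ball of radius `r` around `x`
    (hLip : ∀ ⦃α' α : ℝ⦄, α₀ ≤ α' → α' < α → α ≤ αs → ∀ t (y z : E),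
      ENNReal.ofReal (N α' (y - x)) ≤ r → ENNReal.ofReal (N α' (z - x)) ≤ r →
      N α (B y t - B z t) ≤ C₂ * (α - α') ^ (β - 1) * N α' (y - z))
    -- `‖u - x‖^{(0)} ≤ r` and `‖v - x‖^{(0)} ≤ r`
    (hu : ∀ α t, α₀ < α → α ≤ αs → 0 ≤ t → t < (α - α₀) / lam →
      ENNReal.ofReal (N α (u t - x)) ≤ r)
    (hv : ∀ α t, α₀ < α → α ≤ αs → 0 ≤ t → t < (α - α₀) / lam →
      ENNReal.ofReal (N α (v t - x)) ≤ r)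
    -- `M` bounds the weighted norm `‖u - v‖^{(γ)}`
    (huv : ∀ α t, α₀ < α → α ≤ αs → 0 ≤ t → t < (α - α₀) / lam →
      (α - α₀ - lam * t) ^ γ * N α (u t - v t) ≤ M)
    -- integrability of the integrands defining `𝒯(u)` and `𝒯(v)`
    (hIu : ∀ t, IntervalIntegrable (fun s => U t s (B (u s) s))
      MeasureTheory.volume 0 t)
    (hIv : ∀ t, IntervalIntegrable (fun s => U t s (B (v s) s))
      MeasureTheory.volume 0 t)
    -- the scale norms are compatible with the Bochner integral
    (hint : ∀ α t, 0 ≤ t →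
      N α (∫ s in (0:ℝ)..t, (U t s (B (u s) s) - U t s (B (v s) s))) ≤
        ∫ s in (0:ℝ)..t, N α (U t s (B (u s) s) - U t s (B (v s) s)))
    (hmeas : ∀ α t, IntervalIntegrable
      (fun s => N α (U t s (B (u s) s) - U t s (B (v s) s)))
      MeasureTheory.volume 0 t) :
    -- contraction estimate for `𝒯(u)(t) = ∫₀ᵗ U(t,s) B(u(s),s) ds`
    (∀ α t, α₀ < α → α ≤ αs → 0 ≤ t → t < (α - α₀) / lam →
      (α - α₀ - lam * t) ^ γ *
        N α ((∫ s in (0:ℝ)..t, U t s (B (u s) s)) -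
             (∫ s in (0:ℝ)..t, U t s (B (v s) s))) ≤
        2 ^ (2 * γ + 1 - β) * C₁ * C₂ / ((γ - β) * lam) * M) ∧
    -- strict contraction when λ is large enough
    (2 ^ (2 * γ + 1 - β) * C₁ * C₂ / (γ - β) < lam →
      2 ^ (2 * γ + 1 - β) * C₁ * C₂ / ((γ - β) * lam) < 1) := by
  have hγβ : 0 < γ - β := sub_pos.mpr hγl
  constructor
  · intro α t hα0 hαs' ht0 htlt
    have hlt : lam * t < α - α₀ := by
      have h := (lt_div_iff₀ hlam).mp htlt
      linarith [h, mul_comm t lam]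
    set d := α - α₀ - lam * t with hddef
    have hd : 0 < d := by simp only [hddef]; linarith
    have hd2 : 0 < d / 2 := by linarith
    have hlt0 : 0 ≤ lam * t := mul_nonneg hlam.le ht0
    set α' := α - d / 2 with hα'def
    have h1 : α₀ ≤ α' := by simp only [hα'def, hddef]; linarith
    have h2 : α' < α := by simp only [hα'def]; linarith
    have h2s : α' ≤ αs := (h2.trans_le hαs').le
    have hαα' : α - α' = d / 2 := by simp only [hα'def]; ring
    set p := β - 1 - γ with hpdef
    set K := C₁ * C₂ * M * 2 ^ (1 + γ - β) * (d / 2) ^ (-β) with hKdef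
    have hK0 : 0 ≤ K := by
      refine mul_nonneg (mul_nonneg (mul_nonneg (mul_nonneg hC₁.le hC₂.le) hM) ?_) ?_
      · exact Real.rpow_nonneg (by norm_num) _
      · exact Real.rpow_nonneg hd2.le _
    -- pointwise bound of the integrand
    have hpt : ∀ s ∈ Set.Icc (0:ℝ) t,
        N α (U t s (B (u s) s) - U t s (B (v s) s)) ≤
          K * (d / 2 + lam * (t - s)) ^ p := by
      intro s hs
      obtain ⟨hs0, hst⟩ := hs
      set e := d / 2 + lam * (t - s) with hedef
      have hets : lam * (t - s) = lam * t - lam * s := by ring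
      have hls : 0 ≤ lam * s := mul_nonneg hlam.le hs0
      have hlts : 0 ≤ lam * (t - s) := mul_nonneg hlam.le (by linarith)
      have he : 0 < e := by simp only [hedef]; linarith
      have he2 : 0 < e / 2 := by linarith
      set α'' := α' - e / 2 with hα''def
      have hA : α₀ < α'' := by
        simp only [hα''def, hα'def, hedef, hddef]; linarith [hets]
      have hB : α'' < α' := by simp only [hα''def]; linarith
      have hBs : α'' ≤ αs := (hB.trans h2).le.trans hαs'
      have hα'α'' : α' - α'' = e / 2 := by simp only [hα''def]; ring
      have hegap : α'' - α₀ - lam * s = e / 2 := by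
        simp only [hα''def, hα'def, hedef, hddef]; linarith [hets]
      clear_value e α''
      have hslt : s < (α'' - α₀) / lam := by
        rw [lt_div_iff₀ hlam, mul_comm]
        linarith [hegap, he2]
      have hsu := hu α'' s hA hBs hs0 hslt
      have hsv := hv α'' s hA hBs hs0 hslt
      have h3 := hLip hA.le hB h2s s (u s) (v s) hsu hsv
      have h4 := hU h1 h2 hαs' t s (B (u s) s - B (v s) s)
      have h6 := huv α'' s hA hBs hs0 hslt
      rw [hegap] at h6
      have h5 : N α'' (u s - v s) ≤ M * (e / 2) ^ (-γ) := by
        have hrp : 0 < (e / 2) ^ γ := Real.rpow_pos_of_pos he2 γ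
        rw [Real.rpow_neg he2.le, ← div_eq_mul_inv]
        rw [le_div_iff₀ hrp]
        linarith [h6, mul_comm ((e/2)^γ) (N α'' (u s - v s))]
      have hstep : N α (U t s (B (u s) s) - U t s (B (v s) s)) ≤
          C₁ * (d / 2) ^ (-β) * (C₂ * (e / 2) ^ (β - 1) * (M * (e / 2) ^ (-γ))) := by
        rw [← map_sub]
        refine (h4.trans ?_)
        rw [hαα']
        refine mul_le_mul_of_nonneg_left ?_
          (mul_nonneg hC₁.le (Real.rpow_nonneg hd2.le _))
        rw [hα'α''] at h3
        refine h3.trans (mul_le_mul_of_nonneg_left h5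
          (mul_nonneg hC₂.le (Real.rpow_nonneg he2.le _)))
      refine hstep.trans_eq ?_
      have h7 : (e / 2) ^ (β - 1) * (e / 2) ^ (-γ) = 2 ^ (1 + γ - β) * e ^ p := by
        rw [← Real.rpow_add he2, show β - 1 + -γ = p from by rw [hpdef]; ring,
          aux_half e p he, show -p = 1 + γ - β from by rw [hpdef]; ring]
      calc C₁ * (d / 2) ^ (-β) * (C₂ * (e / 2) ^ (β - 1) * (M * (e / 2) ^ (-γ)))
          = C₁ * (d / 2) ^ (-β) * (C₂ * M * ((e / 2) ^ (β - 1) * (e / 2) ^ (-γ))) := by ring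
        _ = C₁ * (d / 2) ^ (-β) * (C₂ * M * (2 ^ (1 + γ - β) * e ^ p)) := by rw [h7]
        _ = K * e ^ p := by rw [hKdef]; ring
    -- integrability of the bounding function
    have hepos : ∀ s ∈ Set.uIcc (0:ℝ) t, 0 < d / 2 + lam * (t - s) := by
      intro s hs
      rw [Set.uIcc_of_le ht0] at hs
      have : 0 ≤ lam * (t - s) := mul_nonneg hlam.le (by linarith [hs.2])
      linarith
    have hecont : ContinuousOn (fun s : ℝ => d / 2 + lam * (t - s)) (Set.uIcc 0 t) := by
      fun_prop
    have hφcont : ContinuousOn (fun s : ℝ => (d / 2 + lam * (t - s)) ^ p) (Set.uIcc 0 t) := by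
      apply ContinuousOn.rpow_const hecont
      intro s hs
      exact Or.inl (hepos s hs).ne'
    have hφint : IntervalIntegrable (fun s : ℝ => (d / 2 + lam * (t - s)) ^ p)
        MeasureTheory.volume 0 t := hφcont.intervalIntegrable
    have hgint : IntervalIntegrable (fun s : ℝ => K * (d / 2 + lam * (t - s)) ^ p)
        MeasureTheory.volume 0 t := hφint.const_mul K
    have hmono := intervalIntegral.integral_mono_on ht0 (hmeas α t) hgint hpt
    -- compute the integral of the bound
    have hF : ∀ s ∈ Set.uIcc (0:ℝ) t,
        HasDerivAt (fun y : ℝ => (d / 2 + lam * (t - y)) ^ (β - γ) / ((γ - β) * lam))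
          ((d / 2 + lam * (t - s)) ^ p) s := by
      intro s hs
      have he := hepos s hs
      have hinner : HasDerivAt (fun y : ℝ => d / 2 + lam * (t - y)) (lam * (-1)) s :=
        (((hasDerivAt_id s).const_sub t).const_mul lam).const_add (d / 2)
      have houter := Real.hasDerivAt_rpow_const (x := d / 2 + lam * (t - s))
        (p := β - γ) (Or.inl he.ne')
      have h2' := (houter.comp s hinner).div_const ((γ - β) * lam)
      convert h2' using 1
      case e'_4 => rfl
      case e'_5 => rfl
      case e'_8 => rfl
      rw [show β - γ - 1 = p from by rw [hpdef]; ring]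
      field_simp
      ring
    have hφval : ∫ s in (0:ℝ)..t, (d / 2 + lam * (t - s)) ^ p =
        ((d / 2) ^ (β - γ) - (d / 2 + lam * t) ^ (β - γ)) / ((γ - β) * lam) := by
      rw [intervalIntegral.integral_eq_sub_of_hasDerivAt hF hφint]
      simp only [sub_self, mul_zero, add_zero, sub_zero]
      rw [div_sub_div_same]
    have hφle : ∫ s in (0:ℝ)..t, (d / 2 + lam * (t - s)) ^ p ≤
        (d / 2) ^ (β - γ) / ((γ - β) * lam) := by
      have hc : 0 < (γ - β) * lam := mul_pos hγβ hlam
      rw [hφval, sub_div]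
      have h0 : 0 ≤ (d / 2 + lam * t) ^ (β - γ) / ((γ - β) * lam) :=
        div_nonneg (Real.rpow_nonneg (by linarith) _) hc.le
      linarith
    -- final assembly
    have hsub : (∫ s in (0:ℝ)..t, U t s (B (u s) s)) -
        (∫ s in (0:ℝ)..t, U t s (B (v s) s)) =
        ∫ s in (0:ℝ)..t, (U t s (B (u s) s) - U t s (B (v s) s)) :=
      (intervalIntegral.integral_sub (hIu t) (hIv t)).symm
    rw [hsub]
    have hI2 : ∫ s in (0:ℝ)..t, K * (d / 2 + lam * (t - s)) ^ p =
        K * ∫ s in (0:ℝ)..t, (d / 2 + lam * (t - s)) ^ p :=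
      intervalIntegral.integral_const_mul K _
    have hchain : N α (∫ s in (0:ℝ)..t, (U t s (B (u s) s) - U t s (B (v s) s))) ≤
        K * ((d / 2) ^ (β - γ) / ((γ - β) * lam)) := by
      refine (hint α t ht0).trans (hmono.trans ?_)
      rw [hI2]
      exact mul_le_mul_of_nonneg_left hφle hK0
    have hdγ : 0 ≤ d ^ γ := Real.rpow_nonneg hd.le _
    refine (mul_le_mul_of_nonneg_left hchain hdγ).trans_eq ?_
    have e1 : (d / 2) ^ (-β) * (d / 2) ^ (β - γ) = 2 ^ γ * d ^ (-γ) := by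
      rw [← Real.rpow_add hd2, show -β + (β - γ) = -γ from by ring,
        aux_half d (-γ) hd, neg_neg]
    have e2 : d ^ γ * d ^ (-γ) = 1 := by
      rw [← Real.rpow_add hd]; norm_num
    have e3 : (2:ℝ) ^ (1 + γ - β) * 2 ^ γ = 2 ^ (2 * γ + 1 - β) := by
      rw [← Real.rpow_add (by norm_num : (0:ℝ) < 2),
        show 1 + γ - β + γ = 2 * γ + 1 - β from by ring]
    calc d ^ γ * (K * ((d / 2) ^ (β - γ) / ((γ - β) * lam)))
        = C₁ * C₂ * M * 2 ^ (1 + γ - β) *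
            ((d / 2) ^ (-β) * (d / 2) ^ (β - γ)) * d ^ γ / ((γ - β) * lam) := by
          rw [hKdef]; ring
      _ = C₁ * C₂ * M * (2 ^ (1 + γ - β) * 2 ^ γ) * (d ^ γ * d ^ (-γ)) /
            ((γ - β) * lam) := by rw [e1]; ring
      _ = 2 ^ (2 * γ + 1 - β) * C₁ * C₂ / ((γ - β) * lam) * M := by
          rw [e2, e3]; ring
  · intro h
    rw [← div_div]
    exact (div_lt_one hlam).mpr h
end

section
/- Let λ > 0, γ ∈ (0,1), β ∈ [0,1/2), C₁ > 0, and α₀ < α*. Suppose w : [0,(α*-α₀)/λ) → B_{α*} satisfies M := sup_{α∈(α₀,α*], 0≤t<(α-α₀)/λ} (α-α₀-λt)^γ ‖w(t)‖_α < ∞, and U(t,s) satisfies ‖U(t,s)y‖_α ≤ C₁ ‖y‖_{α'} for all α' < α (case β = 0). Then for all α ∈ (α₀,α*] and t ∈ [0,(α-α₀)/λ), one has ‖∫₀ᵗ U(t,s) w(s) ds‖_α ≤ C₁ M (α*-α₀)^{1-γ} / (λ(1-γ)). -/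
theorem stmt10 (E : Type*) [NormedAddCommGroup E] [NormedSpace ℝ E] [CompleteSpace E]
    (N : ℝ → E → ℝ) (γ lam C₁ α₀ αs M : ℝ)
    (hγ0 : 0 < γ) (hγ1 : γ < 1) (hlam : 0 < lam) (hC₁ : 0 < C₁) (hα : α₀ < αs)
    (hM : 0 ≤ M)
    (U : ℝ → ℝ → E →ₗ[ℝ] E) (w : ℝ → E)
    (hN : ∀ α (y : E), 0 ≤ N α y)
    -- evolution bound with β = 0
    (hU : ∀ ⦃α' α : ℝ⦄, α₀ ≤ α' → α' < α → α ≤ αs → ∀ t s (y : E),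
      N α (U t s y) ≤ C₁ * N α' y)
    -- `M` bounds the weighted norm `‖w‖^{(γ)}`
    (hw : ∀ α t, α₀ < α → α ≤ αs → 0 ≤ t → t < (α - α₀) / lam →
      (α - α₀ - lam * t) ^ γ * N α (w t) ≤ M)
    -- the scale norms are compatible with the Bochner integral
    (hint : ∀ α t, 0 ≤ t →
      N α (∫ s in (0:ℝ)..t, U t s (w s)) ≤ ∫ s in (0:ℝ)..t, N α (U t s (w s)))
    (hmeas : ∀ α t, IntervalIntegrable (fun s => N α (U t s (w s)))
      MeasureTheory.volume 0 t) :
    ∀ α t, α₀ < α → α ≤ αs → 0 ≤ t → t < (α - α₀) / lam →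
      N α (∫ s in (0:ℝ)..t, U t s (w s)) ≤
        C₁ * M * (αs - α₀) ^ (1 - γ) / (lam * (1 - γ)) := by
  intro α t hα1 hα2 ht htlt
  have hc : lam * t < α - α₀ := by
    rw [lt_div_iff₀ hlam] at htlt; nlinarith
  have hct : 0 < α - α₀ - lam * t := by linarith
  have hγ' : 0 < 1 - γ := by linarith
  -- pointwise bound
  have key : ∀ s ∈ Set.Icc (0:ℝ) t,
      N α (U t s (w s)) ≤ C₁ * M * (α - α₀ - lam * s) ^ (-γ) := by
    intro s hs
    obtain ⟨hs0, hst⟩ := hs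
    have hls : lam * s ≤ lam * t := by nlinarith
    have hcs : 0 < α - α₀ - lam * s := by linarith
    have hbound : ∀ α' ∈ Set.Ioo (α₀ + lam * s) α,
        N α (U t s (w s)) ≤ C₁ * M * (α' - α₀ - lam * s) ^ (-γ) := by
      intro α' hα'
      obtain ⟨h1, h2⟩ := hα'
      have hls0 : 0 ≤ lam * s := mul_nonneg hlam.le hs0
      have hp : 0 < α' - α₀ - lam * s := by linarith
      have h3 : N α (U t s (w s)) ≤ C₁ * N α' (w s) :=
        hU (by linarith) h2 (by linarith) t s (w s)
      have h4 := hw α' s (by linarith) (by linarith) hs0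
        (by rw [lt_div_iff₀ hlam]; linarith)
      have h5 : N α' (w s) ≤ M * (α' - α₀ - lam * s) ^ (-γ) := by
        rw [Real.rpow_neg hp.le, mul_comm M, ← div_eq_inv_mul,
          le_div_iff₀ (Real.rpow_pos_of_pos hp γ)]
        calc N α' (w s) * (α' - α₀ - lam * s) ^ γ
            = (α' - α₀ - lam * s) ^ γ * N α' (w s) := by ring
          _ ≤ M := h4
      calc N α (U t s (w s)) ≤ C₁ * N α' (w s) := h3
        _ ≤ C₁ * (M * (α' - α₀ - lam * s) ^ (-γ)) := by
            exact mul_le_mul_of_nonneg_left h5 hC₁.le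
        _ = C₁ * M * (α' - α₀ - lam * s) ^ (-γ) := by ring
    -- take limit α' → α⁻
    have hcont : ContinuousAt (fun α' : ℝ => C₁ * M * (α' - α₀ - lam * s) ^ (-γ)) α := by
      apply ContinuousAt.mul continuousAt_const
      apply ContinuousAt.rpow_const
      · exact (continuousAt_id.sub continuousAt_const).sub continuousAt_const
      · left; exact ne_of_gt hcs
    have htend : Filter.Tendsto (fun α' : ℝ => C₁ * M * (α' - α₀ - lam * s) ^ (-γ))
        (nhdsWithin α (Set.Iio α)) (nhds (C₁ * M * (α - α₀ - lam * s) ^ (-γ))) :=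
      hcont.continuousWithinAt.tendsto
    refine ge_of_tendsto htend ?_
    filter_upwards [Ioo_mem_nhdsLT (by linarith : α₀ + lam * s < α)] with α' hα'
    exact hbound α' hα'
  -- integrability of the majorant
  have hcont_g0 : ContinuousOn (fun s : ℝ => (α - α₀ - lam * s) ^ (-γ))
      (Set.uIcc 0 t) := by
    apply ContinuousOn.rpow_const
    · exact Continuous.continuousOn (by continuity)
    · intro x hx
      rw [Set.uIcc_of_le ht] at hx
      left
      have h1 : lam * x ≤ lam * t := by nlinarith [hx.1, hx.2]
      have h2 : 0 < α - α₀ - lam * x := by linarith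
      linarith
  have hcont_g : ContinuousOn (fun s : ℝ => C₁ * M * (α - α₀ - lam * s) ^ (-γ))
      (Set.uIcc 0 t) := continuousOn_const.mul hcont_g0
  have int_g : IntervalIntegrable (fun s : ℝ => C₁ * M * (α - α₀ - lam * s) ^ (-γ))
      MeasureTheory.volume 0 t := hcont_g.intervalIntegrable
  -- antiderivative
  set F : ℝ → ℝ := fun s => (α - α₀ - lam * s) ^ (1 - γ) * (-(lam * (1 - γ))⁻¹) with hF
  have hderiv : ∀ s ∈ Set.uIcc (0:ℝ) t,
      HasDerivAt F ((α - α₀ - lam * s) ^ (-γ)) s := by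
    intro s hs
    rw [Set.uIcc_of_le ht] at hs
    have hls : lam * s ≤ lam * t := by nlinarith [hs.1, hs.2]
    have hcs : 0 < α - α₀ - lam * s := by linarith
    have h1 : HasDerivAt (fun x : ℝ => α - α₀ - lam * x) (-lam) s := by
      simpa using ((hasDerivAt_id s).const_mul lam).const_sub (α - α₀)
    have h2 := (h1.rpow_const (p := 1 - γ) (Or.inl (ne_of_gt hcs))).mul_const
      (-(lam * (1 - γ))⁻¹)
    rw [show (1 : ℝ) - γ - 1 = -γ from by ring] at h2
    have heq : -lam * (1 - γ) * (α - α₀ - lam * s) ^ (-γ) * (-(lam * (1 - γ))⁻¹)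
        = (α - α₀ - lam * s) ^ (-γ) := by
      have hne : lam * (1 - γ) ≠ 0 := by positivity
      field_simp
    rw [heq] at h2
    exact h2
  have hintderiv : IntervalIntegrable (fun s : ℝ => (α - α₀ - lam * s) ^ (-γ))
      MeasureTheory.volume 0 t := hcont_g0.intervalIntegrable
  have hval : (∫ s in (0:ℝ)..t, (α - α₀ - lam * s) ^ (-γ)) = F t - F 0 :=
    intervalIntegral.integral_eq_sub_of_hasDerivAt hderiv hintderiv
  -- put it together
  have step1 := hint α t ht
  have step2 : (∫ s in (0:ℝ)..t, N α (U t s (w s))) ≤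
      ∫ s in (0:ℝ)..t, C₁ * M * (α - α₀ - lam * s) ^ (-γ) :=
    intervalIntegral.integral_mono_on ht (hmeas α t) int_g key
  have step3 : (∫ s in (0:ℝ)..t, C₁ * M * (α - α₀ - lam * s) ^ (-γ))
      = C₁ * M * (F t - F 0) := by
    rw [← hval, ← intervalIntegral.integral_const_mul]
  have hF0 : F 0 = (α - α₀) ^ (1 - γ) * (-(lam * (1 - γ))⁻¹) := by simp [hF]
  have hFt_le : F t - F 0 ≤ (αs - α₀) ^ (1 - γ) / (lam * (1 - γ)) := by
    rw [hF0, hF]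
    have h1 : (0:ℝ) ≤ (α - α₀ - lam * t) ^ (1 - γ) := Real.rpow_nonneg hct.le _
    have h2 : (α - α₀) ^ (1 - γ) ≤ (αs - α₀) ^ (1 - γ) :=
      Real.rpow_le_rpow (by linarith) (by linarith) hγ'.le
    have hpos : 0 < lam * (1 - γ) := by positivity
    rw [div_eq_mul_inv]
    have : (α - α₀ - lam * t) ^ (1 - γ) * (-(lam * (1 - γ))⁻¹)
        - (α - α₀) ^ (1 - γ) * (-(lam * (1 - γ))⁻¹)
        = ((α - α₀) ^ (1 - γ) - (α - α₀ - lam * t) ^ (1 - γ)) * (lam * (1 - γ))⁻¹ := by ring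
    rw [this]
    apply mul_le_mul_of_nonneg_right _ (inv_nonneg.mpr hpos.le)
    linarith
  calc N α (∫ s in (0:ℝ)..t, U t s (w s))
      ≤ ∫ s in (0:ℝ)..t, N α (U t s (w s)) := step1
    _ ≤ ∫ s in (0:ℝ)..t, C₁ * M * (α - α₀ - lam * s) ^ (-γ) := step2
    _ = C₁ * M * (F t - F 0) := step3
    _ ≤ C₁ * M * ((αs - α₀) ^ (1 - γ) / (lam * (1 - γ))) :=
        mul_le_mul_of_nonneg_left hFt_le (by positivity)
    _ = C₁ * M * (αs - α₀) ^ (1 - γ) / (lam * (1 - γ)) := by ring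
end
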